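/- Let n ∈ ℕ, let a_1, …, a_l ∈ ℝ be pairwise distinct points, and let d_1, …, d_l ∈ ℕ with d_i ≤ n for each i. Then the subspace ∑_{i=1}^l (u−a_i)^{d_i}·U_{n−d_i} of U_n (the space of sums of multiples of the (u−a_i)^{d_i} of degree ≤ n) has dimension min( n+1 , ∑_{i=1}^l (n−d_i+1) ). -/

import Mathlib

open Polynomial Module Submodule Finset

noncomputable section

namespace SSP

/-- eval at 0 of the j-th derivative, as a linear map. -/
def evd (j : ℕ) : Polynomial ℝ →ₗ[ℝ] ℝ :=
  (Polynomial.leval 0).comp ((Polynomial.derivative : Polynomial ℝ →ₗ[ℝ] Polynomial ℝ) ^ j)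

lemma evd_apply (j : ℕ) (p : Polynomial ℝ) :
    evd j p = Polynomial.eval 0 (Polynomial.derivative^[j] p) := by
  simp [evd, Polynomial.leval_apply, Module.End.pow_apply]

/-- The bilinear concomitant, as a linear functional in the first argument. -/
def Bl (n : ℕ) (q : Polynomial ℝ) : Polynomial ℝ →ₗ[ℝ] ℝ :=
  ∑ j ∈ Finset.range (n+1), ((-1:ℝ)^j * evd (n - j) q) • evd j

lemma Bl_apply (n : ℕ) (q p : Polynomial ℝ) :
    Bl n q p = ∑ j ∈ Finset.range (n+1),
      (-1:ℝ)^j * (Polynomial.eval 0 (Polynomial.derivative^[j] p))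
        * Polynomial.eval 0 (Polynomial.derivative^[n-j] q) := by
  simp only [Bl, LinearMap.sum_apply, LinearMap.smul_apply, smul_eq_mul, evd_apply]
  exact Finset.sum_congr rfl fun j _ => by ring

lemma Bl_add (n : ℕ) (q q' : Polynomial ℝ) : Bl n (q + q') = Bl n q + Bl n q' := by
  refine LinearMap.ext fun p => ?_
  simp only [Bl_apply, LinearMap.add_apply, ← evd_apply, map_add, ← Finset.sum_add_distrib]
  exact Finset.sum_congr rfl fun j _ => by ring

lemma Bl_smul (n : ℕ) (c : ℝ) (q : Polynomial ℝ) : Bl n (c • q) = c • Bl n q := by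
  refine LinearMap.ext fun p => ?_
  simp only [Bl_apply, LinearMap.smul_apply, ← evd_apply, map_smul, smul_eq_mul, Finset.mul_sum]
  exact Finset.sum_congr rfl fun j _ => by ring

/-- Polynomial version of the concomitant. -/
def Bpoly (n : ℕ) (p q : Polynomial ℝ) : Polynomial ℝ :=
  ∑ j ∈ Finset.range (n+1),
    ((-1:ℝ)^j) • (Polynomial.derivative^[j] p * Polynomial.derivative^[n-j] q)

lemma eval_Bpoly (n : ℕ) (p q : Polynomial ℝ) (t : ℝ) :
    Polynomial.eval t (Bpoly n p q) = ∑ j ∈ Finset.range (n+1),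
      (-1:ℝ)^j * (Polynomial.eval t (Polynomial.derivative^[j] p))
        * Polynomial.eval t (Polynomial.derivative^[n-j] q) := by
  simp only [Bpoly, Polynomial.eval_finset_sum, Polynomial.eval_smul, Polynomial.eval_mul,
    smul_eq_mul]
  exact Finset.sum_congr rfl fun j _ => by ring

lemma Bl_eq_eval_Bpoly (n : ℕ) (q p : Polynomial ℝ) :
    Bl n q p = Polynomial.eval 0 (Bpoly n p q) := by
  rw [Bl_apply, eval_Bpoly]

lemma derivative_Bpoly (n : ℕ) (p q : Polynomial ℝ)
    (hp : p.natDegree ≤ n) (hq : q.natDegree ≤ n) :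
    Polynomial.derivative (Bpoly n p q) = 0 := by
  have hstep : Polynomial.derivative (Bpoly n p q) =
      (∑ j ∈ Finset.range (n+1),
        ((-1:ℝ)^j) • (Polynomial.derivative^[j+1] p * Polynomial.derivative^[n-j] q)) +
      ∑ j ∈ Finset.range (n+1),
        ((-1:ℝ)^j) • (Polynomial.derivative^[j] p * Polynomial.derivative^[(n-j)+1] q) := by
    rw [Bpoly, map_sum, ← Finset.sum_add_distrib]
    refine Finset.sum_congr rfl fun j hj => ?_
    rw [Polynomial.derivative_smul, Polynomial.derivative_mul, smul_add,
      Function.iterate_succ_apply', Function.iterate_succ_apply']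
  have hz1 : Polynomial.derivative^[n+1] p = 0 :=
    Polynomial.iterate_derivative_eq_zero (by omega)
  have hz2 : Polynomial.derivative^[n+1] q = 0 :=
    Polynomial.iterate_derivative_eq_zero (by omega)
  rw [hstep]
  have h2 : ∑ j ∈ Finset.range (n+1),
      ((-1:ℝ)^j) • (Polynomial.derivative^[j] p * Polynomial.derivative^[(n-j)+1] q) =
      ∑ i ∈ Finset.range n,
        (-(1:ℝ)) • (((-1:ℝ)^i) • (Polynomial.derivative^[i+1] p
          * Polynomial.derivative^[n-(i+1)+1] q)) + ((-1:ℝ)^0) •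
          (Polynomial.derivative^[0] p * Polynomial.derivative^[(n-0)+1] q) := by
    rw [Finset.sum_range_succ']
    congr 1
    refine Finset.sum_congr rfl fun i hi => ?_
    have hpow : (-1:ℝ)^(i+1) = -1 * (-1:ℝ)^i := by ring
    rw [hpow, ← smul_smul]
  rw [h2]
  have hn0 : n - 0 + 1 = n + 1 := by omega
  rw [hn0, hz2, mul_zero, smul_zero, add_zero]
  have h3 : ∀ i ∈ Finset.range n, n - (i+1) + 1 = n - i := fun i hi => by
    have := Finset.mem_range.mp hi; omega
  have h4 : ∑ i ∈ Finset.range n,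
      (-(1:ℝ)) • (((-1:ℝ)^i) • (Polynomial.derivative^[i+1] p
        * Polynomial.derivative^[n-(i+1)+1] q)) =
      - ∑ i ∈ Finset.range n,
        ((-1:ℝ)^i) • (Polynomial.derivative^[i+1] p * Polynomial.derivative^[n-i] q) := by
    rw [← Finset.sum_neg_distrib]
    refine Finset.sum_congr rfl fun i hi => ?_
    rw [h3 i hi, neg_smul, one_smul]
  rw [h4, Finset.sum_range_succ, Nat.sub_self, hz1, zero_mul, smul_zero, add_zero]
  exact add_neg_cancel _


lemma eval_Bpoly_const (n : ℕ) (p q : Polynomial ℝ)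
    (hp : p.natDegree ≤ n) (hq : q.natDegree ≤ n) (t : ℝ) :
    Polynomial.eval 0 (Bpoly n p q) = Polynomial.eval t (Bpoly n p q) := by
  obtain ⟨c, hc⟩ := Polynomial.natDegree_eq_zero.mp
    (Polynomial.natDegree_eq_zero_of_derivative_eq_zero (derivative_Bpoly n p q hp hq))
  rw [← hc, Polynomial.eval_C, Polynomial.eval_C]

/-- The key identity. -/
lemma Bl_X_sub_pow (n : ℕ) (t : ℝ) (k : ℕ) (hk : k ≤ n) (q : Polynomial ℝ)
    (hq : q.natDegree ≤ n) :
    Bl n q ((X - C t)^k) = (-1:ℝ)^k * (k.factorial : ℝ)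
      * Polynomial.eval t (Polynomial.derivative^[n-k] q) := by
  have hp : ((X - C t)^k).natDegree ≤ n := by
    rw [Polynomial.natDegree_pow, Polynomial.natDegree_X_sub_C, mul_one]; exact hk
  rw [Bl_eq_eval_Bpoly, eval_Bpoly_const n _ q hp hq t, eval_Bpoly]
  rw [Finset.sum_eq_single k]
  · rw [Polynomial.iterate_derivative_X_sub_pow, Nat.sub_self, pow_zero, Nat.descFactorial_self]
    simp
  · intro j hj hne
    rw [Polynomial.iterate_derivative_X_sub_pow]
    rcases lt_or_gt_of_ne hne with h | h
    · have : Polynomial.eval t ((k.descFactorial j) • (X - C t)^(k-j)) = 0 := by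
        rw [Polynomial.eval_smul, Polynomial.eval_pow]
        simp [zero_pow (by omega : k - j ≠ 0)]
      rw [this, mul_zero, zero_mul]
    · rw [Nat.descFactorial_eq_zero_iff_lt.mpr h]
      simp
  · intro h
    exact absurd (Finset.mem_range.mpr (by omega)) h

/-- Nondegeneracy. -/
lemma Bl_nondeg (n : ℕ) (q : Polynomial ℝ) (hq : q ∈ Polynomial.degreeLE ℝ (n : WithBot ℕ))
    (h : ∀ p ∈ Polynomial.degreeLE ℝ (n : WithBot ℕ), Bl n q p = 0) : q = 0 := by
  have hq' : q.natDegree ≤ n := Polynomial.natDegree_le_iff_degree_le.mpr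
    (Polynomial.mem_degreeLE.mp hq)
  ext m
  rcases le_or_gt m n with hm | hm
  · have hmem : ((X : Polynomial ℝ) - C 0)^(n - m) ∈ Polynomial.degreeLE ℝ (n : WithBot ℕ) := by
      rw [Polynomial.mem_degreeLE]
      refine le_trans (Polynomial.degree_pow_le _ _) ?_
      refine le_trans (nsmul_le_nsmul_right (Polynomial.degree_X_sub_C_le _) _) ?_
      simp
    have h0 := h _ hmem
    rw [Bl_X_sub_pow n 0 (n-m) (by omega) q hq'] at h0
    have hev : Polynomial.eval 0 (Polynomial.derivative^[n-(n-m)] q) = 0 := by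
      rcases mul_eq_zero.mp h0 with h' | h'
      · rcases mul_eq_zero.mp h' with h'' | h''
        · exact absurd h'' (by positivity)
        · exact absurd h'' (Nat.cast_ne_zero.mpr (Nat.factorial_ne_zero _))
      · exact h'
    have hnm : n - (n - m) = m := by omega
    rw [hnm] at hev
    rw [← Polynomial.coeff_zero_eq_eval_zero, Polynomial.coeff_iterate_derivative] at hev
    have h5 : m.factorial = 0 ∨ q.coeff m = 0 := by
      simpa [Nat.descFactorial_self] using hev
    exact h5.resolve_left (Nat.factorial_ne_zero m)
  · simp [Polynomial.coeff_eq_zero_of_natDegree_lt (by omega : q.natDegree < m)]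

/-- Every polynomial of degree ≤ m is in the span of the (X-c)^k, k ≤ m. -/
lemma mem_span_shifted (c : ℝ) (m : ℕ) (q : Polynomial ℝ)
    (hq : q ∈ Polynomial.degreeLE ℝ (m : WithBot ℕ)) :
    q ∈ Submodule.span ℝ ((fun k => ((X : Polynomial ℝ) - C c)^k) '' Set.Iic m) := by
  have hdeg : q.natDegree ≤ m := Polynomial.natDegree_le_iff_degree_le.mpr
    (Polynomial.mem_degreeLE.mp hq)
  rw [show q = (Polynomial.taylor c q).sum fun i a => Polynomial.C a * (X - Polynomial.C c)^i
    from (Polynomial.sum_taylor_eq q c).symm, Polynomial.sum]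
  refine Submodule.sum_mem _ fun i hi => ?_
  have him : i ≤ m := by
    refine le_trans ?_ hdeg
    rw [← Polynomial.natDegree_taylor q c]
    exact Polynomial.le_natDegree_of_ne_zero (Polynomial.mem_support_iff.mp hi)
  rw [← Polynomial.smul_eq_C_mul]
  exact Submodule.smul_mem _ _ (Submodule.subset_span ⟨i, him, rfl⟩)

/-- Divisibility by (X-c)^m iff derivatives up to order m-1 vanish at c. -/
lemma dvd_iff_derivs (c : ℝ) (m : ℕ) (q : Polynomial ℝ) :
    ((X : Polynomial ℝ) - C c)^m ∣ q ↔
      ∀ j < m, Polynomial.eval c (Polynomial.derivative^[j] q) = 0 := by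
  have hb : ∀ j (r : Polynomial ℝ), Polynomial.eval c (Polynomial.derivative^[j] r)
      = (j.factorial : ℝ) * (Polynomial.taylor c r).coeff j := by
    intro j r
    rw [Polynomial.taylor_coeff, ← Polynomial.factorial_smul_hasseDeriv]
    simp [mul_comm]
  constructor
  · rintro ⟨h, rfl⟩ j hj
    rw [hb]
    have : Polynomial.taylor c ((X - C c)^m * h)
        = X^m * Polynomial.taylor c h := by
      rw [Polynomial.taylor_apply, Polynomial.mul_comp, Polynomial.pow_comp,
        Polynomial.sub_comp, Polynomial.X_comp, Polynomial.C_comp, Polynomial.taylor_apply]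
      ring_nf
    rw [this, mul_comm (X^m), Polynomial.coeff_mul_X_pow']
    simp [Nat.not_le.mpr hj]
  · intro h
    conv_rhs => rw [← Polynomial.sum_taylor_eq q c]
    rw [Polynomial.sum]
    refine Finset.dvd_sum fun i hi => ?_
    rcases lt_or_ge i m with him | him
    · have hz : (Polynomial.taylor c q).coeff i = 0 := by
        have h0 := h i him
        rw [hb] at h0
        have h2 : ((i).factorial : ℝ) ≠ 0 := Nat.cast_ne_zero.mpr (Nat.factorial_ne_zero _)
        exact (mul_eq_zero.mp h0).resolve_left h2
      exact absurd hz (Polynomial.mem_support_iff.mp hi)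
    · exact Dvd.dvd.mul_left (pow_dvd_pow _ him) _

instance fd_degreeLE (m : ℕ) : FiniteDimensional ℝ ↥(Polynomial.degreeLE ℝ (m : WithBot ℕ)) := by
  rw [← Polynomial.degreeLT_succ_eq_degreeLE]
  exact Module.Finite.equiv (Polynomial.degreeLTEquiv ℝ (m+1)).symm

lemma finrank_degreeLE (m : ℕ) :
    Module.finrank ℝ ↥(Polynomial.degreeLE ℝ (m : WithBot ℕ)) = m + 1 := by
  rw [← Polynomial.degreeLT_succ_eq_degreeLE]
  rw [LinearEquiv.finrank_eq (Polynomial.degreeLTEquiv ℝ (m+1))]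
  exact Module.finrank_fin_fun ℝ

/-- Multiplication by a fixed polynomial, as an ℝ-linear map. -/
def mulL (g : Polynomial ℝ) : Polynomial ℝ →ₗ[ℝ] Polynomial ℝ where
  toFun p := g * p
  map_add' := mul_add g
  map_smul' c p := mul_smul_comm c g p

lemma mulL_inj {g : Polynomial ℝ} (hg : g ≠ 0) : Function.Injective (mulL g) :=
  fun x y h => mul_left_cancel₀ hg h

/-- dimension of the space of multiples of G of degree ≤ n -/
lemma finrank_multiples (n : ℕ) (G : Polynomial ℝ) (hG : G ≠ 0) (hE : G.natDegree ≤ n) :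
    Module.finrank ℝ
      ↥(Polynomial.degreeLE ℝ (n : WithBot ℕ) ⊓
        Submodule.restrictScalars ℝ (Ideal.span {G})) = n - G.natDegree + 1 := by
  have hmap : Polynomial.degreeLE ℝ (n : WithBot ℕ) ⊓ Submodule.restrictScalars ℝ (Ideal.span {G})
      = Submodule.map (mulL G) (Polynomial.degreeLE ℝ ((n - G.natDegree : ℕ) : WithBot ℕ)) := by
    apply le_antisymm
    · rintro q ⟨hq1, hq2⟩
      simp only [SetLike.mem_coe] at hq1 hq2 ⊢
      rw [Submodule.restrictScalars_mem, Ideal.mem_span_singleton] at hq2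
      obtain ⟨h, rfl⟩ := hq2
      refine ⟨h, ?_, rfl⟩
      simp only [SetLike.mem_coe]
      rw [Polynomial.mem_degreeLE]
      rcases eq_or_ne h 0 with rfl | hh0
      · simp
      · have hnd : (G * h).natDegree ≤ n := Polynomial.natDegree_le_iff_degree_le.mpr
          (Polynomial.mem_degreeLE.mp hq1)
        rw [Polynomial.natDegree_mul hG hh0] at hnd
        exact Polynomial.natDegree_le_iff_degree_le.mp (by omega)
    · rintro q ⟨h, hh, rfl⟩
      simp only [SetLike.mem_coe] at hh ⊢
      constructor
      · simp only [SetLike.mem_coe]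
        rw [Polynomial.mem_degreeLE]
        show Polynomial.degree (G * h) ≤ (n : WithBot ℕ)
        refine le_trans (Polynomial.degree_mul_le _ _) ?_
        have h1 : G.degree ≤ (G.natDegree : WithBot ℕ) := Polynomial.degree_le_natDegree
        have h2 := Polynomial.mem_degreeLE.mp hh
        calc G.degree + h.degree ≤ (G.natDegree : WithBot ℕ) + ((n - G.natDegree : ℕ) : WithBot ℕ) :=
              add_le_add h1 h2
          _ ≤ (n : WithBot ℕ) := by
              rw [← Nat.cast_add]
              exact_mod_cast by omega
      · simp only [SetLike.mem_coe]
        rw [Submodule.restrictScalars_mem, Ideal.mem_span_singleton]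
        exact Dvd.intro _ rfl
  rw [hmap, LinearEquiv.finrank_eq
    (Submodule.equivMapOfInjective (mulL G) (mulL_inj hG) _).symm, finrank_degreeLE]


/-- Orthogonality characterization for one shifted-power subspace. -/
lemma Vle_iff (n : ℕ) (c : ℝ) (dd : ℕ) (hdd : dd ≤ n) (q : Polynomial ℝ)
    (hq : q.natDegree ≤ n) :
    Submodule.span ℝ {p : Polynomial ℝ | ∃ h ∈ Polynomial.degreeLE ℝ ((n - dd : ℕ) : WithBot ℕ),
        p = (X - C c)^dd * h} ≤ LinearMap.ker (Bl n q)
      ↔ ((X : Polynomial ℝ) - C c)^(n - dd + 1) ∣ q := by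
  constructor
  · intro hle
    rw [dvd_iff_derivs]
    intro j hj
    have hjn : j ≤ n - dd := by omega
    have hmem : ((X : Polynomial ℝ) - C c)^(n - j) ∈
        Submodule.span ℝ {p : Polynomial ℝ | ∃ h ∈ Polynomial.degreeLE ℝ
          ((n - dd : ℕ) : WithBot ℕ), p = (X - C c)^dd * h} := by
      refine Submodule.subset_span ⟨(X - C c)^(n - j - dd), ?_, ?_⟩
      · rw [Polynomial.mem_degreeLE]
        refine le_trans (Polynomial.degree_pow_le _ _) ?_
        refine le_trans (nsmul_le_nsmul_right (Polynomial.degree_X_sub_C_le _) _) ?_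
        simp
        exact_mod_cast by omega
      · rw [← pow_add]
        congr 1
        omega
    have h0 : Bl n q ((X - C c)^(n-j)) = 0 := hle hmem
    rw [Bl_X_sub_pow n c (n-j) (by omega) q hq] at h0
    have hnn : n - (n - j) = j := by omega
    rw [hnn] at h0
    rcases mul_eq_zero.mp h0 with h' | h'
    · rcases mul_eq_zero.mp h' with h'' | h''
      · exact absurd h'' (by positivity)
      · exact absurd h'' (Nat.cast_ne_zero.mpr (Nat.factorial_ne_zero _))
    · exact h'
  · intro hdvd
    rw [Submodule.span_le]
    rintro p ⟨h, hh, rfl⟩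
    have hspan : Submodule.span ℝ ((fun k => ((X : Polynomial ℝ) - C c)^k) '' Set.Iic (n - dd)) ≤
        Submodule.comap (mulL ((X - C c)^dd)) (LinearMap.ker (Bl n q)) := by
      rw [Submodule.span_le]
      rintro x ⟨k, hk, rfl⟩
      simp only [Set.mem_Iic] at hk
      simp only [SetLike.mem_coe, Submodule.mem_comap, LinearMap.mem_ker]
      show Bl n q ((X - C c)^dd * (X - C c)^k) = 0
      rw [← pow_add, Bl_X_sub_pow n c (dd + k) (by omega) q hq]
      have : Polynomial.eval c (Polynomial.derivative^[n - (dd + k)] q) = 0 := by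
        refine (dvd_iff_derivs c (n - dd + 1) q).mp hdvd _ (by omega)
      rw [this, mul_zero]
    have := hspan (mem_span_shifted c (n - dd) h hh)
    exact this

end SSP

open SSP in
/-- for pairwise distinct points `a_1, …, a_l` and `d_i ≤ n`, the subspace
`∑_{i=1}^l (u - a_i)^{d_i} · U_{n - d_i}` of `U_n` has dimension
`min (n+1) (∑_i (n - d_i + 1))`. -/
theorem finrank_sum_shifted_powers
    (n l : ℕ) (a : Fin l → ℝ) (ha : Function.Injective a)
    (d : Fin l → ℕ) (hd : ∀ i, d i ≤ n) :
    Module.finrank ℝ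
        ↥(⨆ i : Fin l, Submodule.span ℝ
            {p : Polynomial ℝ | ∃ h ∈ Polynomial.degreeLE ℝ ((n - d i : ℕ) : WithBot ℕ),
              p = (Polynomial.X - Polynomial.C (a i)) ^ (d i) * h}) =
      min (n + 1) (∑ i, (n - d i + 1)) := by
  classical
  set Λ : Submodule ℝ (Polynomial ℝ) := Polynomial.degreeLE ℝ (n : WithBot ℕ) with hΛdef
  let V : Fin l → Submodule ℝ (Polynomial ℝ) := fun i => Submodule.span ℝ
    {p : Polynomial ℝ | ∃ h ∈ Polynomial.degreeLE ℝ ((n - d i : ℕ) : WithBot ℕ),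
      p = (Polynomial.X - Polynomial.C (a i)) ^ (d i) * h}
  change Module.finrank ℝ ↥(⨆ i, V i) = _
  set W : Submodule ℝ (Polynomial ℝ) := ⨆ i, V i with hWdef
  -- each V i is inside Λ
  have hV : ∀ i, V i ≤ Λ := by
    intro i
    rw [Submodule.span_le]
    rintro p ⟨h, hh, rfl⟩
    simp only [SetLike.mem_coe, hΛdef]
    rw [Polynomial.mem_degreeLE]
    refine le_trans (Polynomial.degree_mul_le _ _) ?_
    have h1 : Polynomial.degree (((X : Polynomial ℝ) - C (a i))^(d i)) ≤ ((d i : ℕ) : WithBot ℕ) := by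
      refine le_trans (Polynomial.degree_pow_le _ _) ?_
      refine le_trans (nsmul_le_nsmul_right (Polynomial.degree_X_sub_C_le _) _) ?_
      simp
    have h2 := Polynomial.mem_degreeLE.mp hh
    calc _ ≤ ((d i : ℕ) : WithBot ℕ) + ((n - d i : ℕ) : WithBot ℕ) := add_le_add h1 h2
      _ ≤ (n : WithBot ℕ) := by
          rw [← Nat.cast_add]
          exact_mod_cast by have := hd i; omega
  have hW : W ≤ Λ := iSup_le hV
  -- the product polynomial
  set G : Polynomial ℝ := ∏ i, (X - C (a i))^(n - d i + 1) with hGdef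
  have hfac0 : ∀ i : Fin l, ((X : Polynomial ℝ) - C (a i))^(n - d i + 1) ≠ 0 :=
    fun i => pow_ne_zero _ (Polynomial.X_sub_C_ne_zero (a i))
  have hG0 : G ≠ 0 := Finset.prod_ne_zero_iff.mpr fun i _ => hfac0 i
  have hGdeg : G.natDegree = ∑ i, (n - d i + 1) := by
    rw [hGdef, Polynomial.natDegree_prod _ _ fun i _ => hfac0 i]
    exact Finset.sum_congr rfl fun i _ => by
      rw [Polynomial.natDegree_pow, Polynomial.natDegree_X_sub_C, mul_one]
  have hgiff : ∀ q : Polynomial ℝ,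
      (∀ i, ((X : Polynomial ℝ) - C (a i))^(n - d i + 1) ∣ q) ↔ G ∣ q := by
    intro q
    constructor
    · intro hq
      exact Fintype.prod_dvd_of_coprime
        (fun i j hij => ((Polynomial.pairwise_coprime_X_sub_C ha) hij).pow) hq
    · intro hq i
      exact (Finset.dvd_prod_of_mem (fun i => ((X : Polynomial ℝ) - C (a i))^(n - d i + 1)) (Finset.mem_univ i)).trans hq
  -- key equivalence
  have hkey : ∀ q : ↥Λ, (∀ p ∈ W, Bl n (↑q) p = 0) ↔ G ∣ (↑q : Polynomial ℝ) := by
    intro q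
    have hq : (↑q : Polynomial ℝ).natDegree ≤ n :=
      Polynomial.natDegree_le_iff_degree_le.mpr (Polynomial.mem_degreeLE.mp q.2)
    constructor
    · intro hp
      rw [← hgiff]
      intro i
      have hWk : W ≤ LinearMap.ker (Bl n ↑q) := fun x hx => LinearMap.mem_ker.mpr (hp x hx)
      exact (Vle_iff n (a i) (d i) (hd i) ↑q hq).mp ((le_iSup V i).trans hWk)
    · intro hGq p hp
      have hWk : W ≤ LinearMap.ker (Bl n ↑q) := iSup_le fun i =>
        (Vle_iff n (a i) (d i) (hd i) ↑q hq).mpr ((hgiff ↑q).mpr hGq i)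
      exact LinearMap.mem_ker.mp (hWk hp)
  haveI : FiniteDimensional ℝ ↥Λ := fd_degreeLE n
  -- the duality map
  let toD : ↥Λ →ₗ[ℝ] Module.Dual ℝ ↥Λ :=
    { toFun := fun q => (Bl n ↑q).comp Λ.subtype
      map_add' := fun q q' => by
        refine LinearMap.ext fun p => ?_
        simp only [Submodule.coe_add, Bl_add, LinearMap.add_apply, LinearMap.comp_apply]
      map_smul' := fun c q => by
        refine LinearMap.ext fun p => ?_
        simp only [Submodule.coe_smul, Bl_smul, LinearMap.smul_apply, LinearMap.comp_apply,
          RingHom.id_apply] }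
  have htoD : ∀ (q : ↥Λ) (p : ↥Λ), toD q p = Bl n ↑q ↑p := fun q p => rfl
  have hinj : Function.Injective toD := by
    rw [← LinearMap.ker_eq_bot]
    rw [LinearMap.ker_eq_bot']
    intro q hq0
    refine Subtype.ext (Bl_nondeg n ↑q q.2 fun p hp => ?_)
    have := LinearMap.congr_fun hq0 ⟨p, hp⟩
    exact this
  have hsurj : Function.Surjective toD :=
    (LinearMap.injective_iff_surjective_of_finrank_eq_finrank
      (Subspace.dual_finrank_eq).symm).mp hinj
  let e : ↥Λ ≃ₗ[ℝ] Module.Dual ℝ ↥Λ := LinearEquiv.ofBijective toD ⟨hinj, hsurj⟩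
  set W' : Submodule ℝ ↥Λ := W.comap Λ.subtype with hW'def
  set Q : Submodule ℝ (Polynomial ℝ) :=
    Λ ⊓ Submodule.restrictScalars ℝ (Ideal.span {G}) with hQdef
  have hQΛ : Q ≤ Λ := inf_le_left
  set Q' : Submodule ℝ ↥Λ := Q.comap Λ.subtype with hQ'def
  have hQeq : Q' = (W'.dualAnnihilator).comap toD := by
    ext q
    simp only [hQ'def, hQdef, Submodule.mem_comap, Submodule.mem_inf,
      Submodule.mem_dualAnnihilator, Submodule.restrictScalars_mem, Ideal.mem_span_singleton]
    constructor
    · rintro ⟨-, hGq⟩ w hw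
      rw [htoD]
      exact ((hkey q).mpr hGq) ↑w hw
    · intro hAll
      refine ⟨q.2, (hkey q).mp fun p hp => ?_⟩
      exact (htoD q ⟨p, hW hp⟩) ▸ hAll ⟨p, hW hp⟩ hp
  -- dimension bookkeeping
  have h1 : Module.finrank ℝ ↥W = Module.finrank ℝ ↥W' :=
    (LinearEquiv.finrank_eq (Submodule.comapSubtypeEquivOfLe hW)).symm
  have h2 : Module.finrank ℝ ↥Q = Module.finrank ℝ ↥Q' :=
    (LinearEquiv.finrank_eq (Submodule.comapSubtypeEquivOfLe hQΛ)).symm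
  have h3 : Module.finrank ℝ ↥Q' = Module.finrank ℝ ↥(W'.dualAnnihilator) := by
    rw [hQeq]
    exact LinearEquiv.finrank_eq (LinearEquiv.ofSubmodule' e _)
  have h4 : Module.finrank ℝ ↥(W'.dualAnnihilator) + Module.finrank ℝ ↥W' = n + 1 := by
    rw [← LinearEquiv.finrank_eq (Subspace.quotEquivAnnihilator W')]
    rw [Submodule.finrank_quotient_add_finrank W']
    exact finrank_degreeLE n
  rcases le_or_gt (∑ i, (n - d i + 1)) n with hE | hE
  · have hQv : Module.finrank ℝ ↥Q = n - (∑ i, (n - d i + 1)) + 1 := by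
      rw [hQdef, hΛdef]
      rw [finrank_multiples n G hG0 (by omega), hGdeg]
    omega
  · have hQbot : Q = ⊥ := by
      rw [eq_bot_iff]
      intro q hq
      rw [Submodule.mem_inf] at hq
      obtain ⟨hq1, hq2⟩ := hq
      rw [Submodule.restrictScalars_mem, Ideal.mem_span_singleton] at hq2
      rcases eq_or_ne q 0 with rfl | hq0
      · exact Submodule.zero_mem ⊥
      · exfalso
        have hle := Polynomial.natDegree_le_of_dvd hq2 hq0
        have : q.natDegree ≤ n :=
          Polynomial.natDegree_le_iff_degree_le.mpr (Polynomial.mem_degreeLE.mp hq1)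
        omega
    have hQv : Module.finrank ℝ ↥Q = 0 := by
      rw [hQbot]
      exact finrank_bot ℝ _
    omega

end
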